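/- Let P_1, …, P_k ∈ ℝ^{m×m} be symmetric idempotent matrices with P_i P_j = 0 for all i ≠ j, and write P_{1:i} = P_1 + ⋯ + P_i. Let π_i : ℝ^m → [0,∞] (extended nonnegative reals) for 1 ≤ i ≤ k satisfy π_i(u) = π_i(P_{1:i} u) for all u ∈ ℝ^m. Suppose there exist vectors u_1*, …, u_k* ∈ ℝ^m such that, for each 1 ≤ i ≤ k, u_i* is the unique minimizer over u ∈ range(P_i) of the function u ↦ π_i(u_{1:i−1}* + u), where u_{1:i−1}* = u_1* + ⋯ + u_{i−1}* (and u_{1:0}* = 0). Then u* = u_1* + ⋯ + u_k* is the unique lexicographic minimizer of (π_1, …, π_k) over range(P_{1:k}); that is: (i) u* ∈ range(P_{1:k}); (ii) for every 1 ≤ i ≤ k and every u ∈ range(P_{1:k}) such that π_j(u) = π_j(u*) for all 1 ≤ j < i, one has π_i(u*) ≤ π_i(u); and (iii) every u ∈ range(P_{1:k}) satisfying (ii) in place of u* equals u*. -/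

import Mathlib

open Matrix

theorem stmt10 (m k : ℕ) (hk : 1 ≤ k)
    (P : Fin k → Matrix (Fin m) (Fin m) ℝ)
    (hsymm : ∀ i, (P i)ᵀ = P i)
    (hidem : ∀ i, P i * P i = P i)
    (horth : ∀ i j, i ≠ j → P i * P j = 0)
    (π : Fin k → (Fin m → ℝ) → ENNReal)
    (hdep : ∀ (i : Fin k) (u : Fin m → ℝ), π i u = π i ((∑ j ∈ Finset.Iic i, P j) *ᵥ u))
    (ustar : Fin k → Fin m → ℝ)
    (hmem : ∀ i, ustar i ∈ LinearMap.range (P i).mulVecLin)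
    (hmin : ∀ i : Fin k, ∀ u ∈ LinearMap.range (P i).mulVecLin, u ≠ ustar i →
      π i ((∑ j ∈ Finset.Iio i, ustar j) + ustar i) <
        π i ((∑ j ∈ Finset.Iio i, ustar j) + u)) :
    (∑ j : Fin k, ustar j) ∈ LinearMap.range (∑ j : Fin k, P j).mulVecLin ∧
    (∀ i : Fin k, ∀ u ∈ LinearMap.range (∑ j : Fin k, P j).mulVecLin,
      (∀ j : Fin k, j < i → π j u = π j (∑ j' : Fin k, ustar j')) →
      π i (∑ j' : Fin k, ustar j') ≤ π i u) ∧
    (∀ u ∈ LinearMap.range (∑ j : Fin k, P j).mulVecLin,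
      (∀ i : Fin k, ∀ w ∈ LinearMap.range (∑ j : Fin k, P j).mulVecLin,
        (∀ j : Fin k, j < i → π j w = π j u) → π i u ≤ π i w) →
      u = ∑ j' : Fin k, ustar j') := by
  classical
  set S : Fin m → ℝ := ∑ j : Fin k, ustar j with hS
  -- matrix sum distributes over mulVec
  have hsum_mulVec : ∀ (s : Finset (Fin k)) (v : Fin m → ℝ),
      (∑ j ∈ s, P j) *ᵥ v = ∑ j ∈ s, P j *ᵥ v := by
    intro s v
    induction s using Finset.induction with
    | empty => simp
    | insert _ _ h ih =>
      rw [Finset.sum_insert h, Finset.sum_insert h, Matrix.add_mulVec, ih]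
  -- mulVec distributes over vector sum
  have hmulVec_sum : ∀ (A : Matrix (Fin m) (Fin m) ℝ) (s : Finset (Fin k))
      (v : Fin k → Fin m → ℝ), A *ᵥ (∑ j ∈ s, v j) = ∑ j ∈ s, A *ᵥ v j := by
    intro A s v
    induction s using Finset.induction with
    | empty => simp
    | insert _ _ h ih =>
      rw [Finset.sum_insert h, Finset.sum_insert h, Matrix.mulVec_add, ih]
  have hPP : ∀ l j : Fin k, P l * P j = if l = j then P j else 0 := by
    intro l j
    by_cases h : l = j
    · subst h; simp [hidem l]
    · simp [h, horth l j h]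
  have hsum_mul : ∀ (s : Finset (Fin k)) (j : Fin k),
      (∑ l ∈ s, P l) * P j = if j ∈ s then P j else 0 := by
    intro s j
    rw [Finset.sum_mul]
    simp_rw [hPP]
    rw [Finset.sum_ite_eq']
  have hfix : ∀ (s : Finset (Fin k)) (j : Fin k),
      (∑ l ∈ s, P l) *ᵥ ustar j = if j ∈ s then ustar j else 0 := by
    intro s j
    obtain ⟨v, hv⟩ := hmem j
    simp only [Matrix.mulVecLin_apply] at hv
    rw [← hv, Matrix.mulVec_mulVec, hsum_mul]
    split <;> simp
  have hSfix : (∑ j : Fin k, P j) *ᵥ S = S := by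
    rw [hS, hmulVec_sum]
    refine Finset.sum_congr rfl fun j _ => ?_
    rw [hfix]
    simp
  have hQu : ∀ u : Fin m → ℝ, u ∈ LinearMap.range (∑ j : Fin k, P j).mulVecLin →
      (∑ j : Fin k, P j) *ᵥ u = u := by
    intro u hu
    obtain ⟨v, hv⟩ := hu
    simp only [Matrix.mulVecLin_apply] at hv
    have hQQ : (∑ j : Fin k, P j) * (∑ j : Fin k, P j) = ∑ j : Fin k, P j := by
      rw [Finset.mul_sum]
      refine Finset.sum_congr rfl fun j _ => ?_
      rw [hsum_mul]
      simp
    rw [← hv, Matrix.mulVec_mulVec, hQQ]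
  -- the key lemma, by strong induction
  have mainN : ∀ n : ℕ, ∀ i : Fin k, (i : ℕ) < n → ∀ u : Fin m → ℝ,
      (∑ j : Fin k, P j) *ᵥ u = u →
      (∀ j : Fin k, j < i → π j u = π j S) →
      (∀ j : Fin k, j < i → P j *ᵥ u = ustar j) ∧
      π i S ≤ π i u ∧ (π i u = π i S → P i *ᵥ u = ustar i) := by
    intro n
    induction n with
    | zero => intro i hi; exact absurd hi (Nat.not_lt_zero _)
    | succ n IH =>
      intro i hi u hu hπ
      have hPj : ∀ j : Fin k, j < i → P j *ᵥ u = ustar j := by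
        intro j hj
        have hjn : (j : ℕ) < n := by
          have := Fin.lt_iff_val_lt_val.mp hj
          omega
        exact (IH j hjn u hu (fun l hl => hπ l (hl.trans hj))).2.2 (hπ j hj)
      have hiIio : i ∉ Finset.Iio i := by simp
      have hu_eq : π i u = π i ((∑ j ∈ Finset.Iio i, ustar j) + P i *ᵥ u) := by
        rw [hdep i u]
        congr 1
        rw [hsum_mulVec, ← Finset.Iio_insert, Finset.sum_insert hiIio]
        rw [Finset.sum_congr rfl fun j hj => hPj j (Finset.mem_Iio.mp hj)]
        exact add_comm _ _
      have hS_eq : π i S = π i ((∑ j ∈ Finset.Iio i, ustar j) + ustar i) := by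
        rw [hdep i S]
        congr 1
        rw [hS, hmulVec_sum]
        have : ∀ l : Fin k, (∑ j ∈ Finset.Iic i, P j) *ᵥ ustar l
            = if l ∈ Finset.Iic i then ustar l else 0 := fun l => hfix _ l
        rw [Finset.sum_congr rfl fun l _ => this l, Finset.sum_ite_mem,
          Finset.univ_inter, ← Finset.Iio_insert, Finset.sum_insert hiIio]
        exact add_comm _ _
      have hrange : P i *ᵥ u ∈ LinearMap.range (P i).mulVecLin := ⟨u, rfl⟩
      refine ⟨hPj, ?_, ?_⟩
      · by_cases hc : P i *ᵥ u = ustar i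
        · rw [hu_eq, hS_eq, hc]
        · rw [hu_eq, hS_eq]
          exact (hmin i _ hrange hc).le
      · intro heq
        by_contra hc
        have hlt := hmin i _ hrange hc
        rw [← hu_eq, ← hS_eq] at hlt
        exact hlt.ne' heq
  have main : ∀ i : Fin k, ∀ u : Fin m → ℝ,
      (∑ j : Fin k, P j) *ᵥ u = u →
      (∀ j : Fin k, j < i → π j u = π j S) →
      (∀ j : Fin k, j < i → P j *ᵥ u = ustar j) ∧
      π i S ≤ π i u ∧ (π i u = π i S → P i *ᵥ u = ustar i) :=
    fun i => mainN (i + 1) i (Nat.lt_succ_self _)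
  have hSmem : S ∈ LinearMap.range (∑ j : Fin k, P j).mulVecLin := ⟨S, hSfix⟩
  refine ⟨hSmem, ?_, ?_⟩
  · intro i u hu hπ
    exact (main i u (hQu u hu) hπ).2.1
  · intro u hu hlex
    have hu' := hQu u hu
    have hallN : ∀ n : ℕ, ∀ i : Fin k, (i : ℕ) < n → π i u = π i S := by
      intro n
      induction n with
      | zero => intro i hi; exact absurd hi (Nat.not_lt_zero _)
      | succ n IH =>
        intro i hi
        have hprev : ∀ j : Fin k, j < i → π j u = π j S := by
          intro j hj
          have : (j : ℕ) < n := by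
            have := Fin.lt_iff_val_lt_val.mp hj
            omega
          exact IH j this
        have h1 : π i S ≤ π i u := (main i u hu' hprev).2.1
        have h2 : π i u ≤ π i S := hlex i S hSmem (fun j hj => (hprev j hj).symm)
        exact le_antisymm h2 h1
    have hall : ∀ i : Fin k, π i u = π i S := fun i => hallN (i + 1) i (Nat.lt_succ_self _)
    have hcomp : ∀ i : Fin k, P i *ᵥ u = ustar i := fun i =>
      (main i u hu' (fun j _ => hall j)).2.2 (hall i)
    calc u = (∑ j : Fin k, P j) *ᵥ u := hu'.symm
      _ = ∑ j : Fin k, P j *ᵥ u := hsum_mulVec _ _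
      _ = ∑ j : Fin k, ustar j := Finset.sum_congr rfl fun j _ => hcomp j
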